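/- A tree T on n ≥ 2 vertices is well-covered if and only if it is square-stable. -/

import Mathlib

open SimpleGraph

/-- The square of a graph: vertices adjacent iff at distance 1 or 2 in `G`. -/
def SimpleGraph.sq {V : Type*} (G : SimpleGraph V) : SimpleGraph V where
  Adj u v := G.Adj u v ∨ (u ≠ v ∧ ∃ w, G.Adj u w ∧ G.Adj w v)
  symm := by
    constructor
    rintro u v (h | ⟨hne, w, h1, h2⟩)
    · exact Or.inl h.symm
    · exact Or.inr ⟨hne.symm, w, h2.symm, h1.symm⟩
  loopless := by
    constructor
    rintro u (h | ⟨hne, _⟩)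
    · exact G.irrefl h
    · exact hne rfl

/-- A stable (independent) set of vertices. -/
def SimpleGraph.IsStableSet {V : Type*} (G : SimpleGraph V) (s : Set V) : Prop :=
  s.Pairwise fun u v => ¬ G.Adj u v

/-- The stability (independence) number. -/
noncomputable def SimpleGraph.alpha {V : Type*} (G : SimpleGraph V) : ℕ :=
  sSup {n | ∃ s : Finset V, G.IsStableSet ↑s ∧ s.card = n}

/-- The matching number: maximum number of edges in a matching. -/
noncomputable def SimpleGraph.mu {V : Type*} (G : SimpleGraph V) : ℕ :=
  sSup {n | ∃ M : G.Subgraph, M.IsMatching ∧ M.edgeSet.ncard = n}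

/-- `s` is a maximum stable set. -/
def SimpleGraph.IsMaximumStable {V : Type*} (G : SimpleGraph V) (s : Finset V) : Prop :=
  G.IsStableSet ↑s ∧ s.card = G.alpha

/-- `s` is a maximal stable set. -/
def SimpleGraph.IsMaximalStable {V : Type*} (G : SimpleGraph V) (s : Finset V) : Prop :=
  G.IsStableSet ↑s ∧ ∀ v ∉ s, ¬ G.IsStableSet (insert v (↑s : Set V))

/-- `G` is square-stable if `α(G) = α(G²)`. -/
def SimpleGraph.SquareStable {V : Type*} (G : SimpleGraph V) : Prop :=
  G.alpha = G.sq.alpha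

/-- König-Egerváry graph: `α(G) + μ(G) = |V(G)|`. -/
def SimpleGraph.KonigEgervary {V : Type*} [Fintype V] (G : SimpleGraph V) : Prop :=
  G.alpha + G.mu = Fintype.card V

/-- A pendant vertex: a vertex of degree 1. -/
def SimpleGraph.Pendant {V : Type*} (G : SimpleGraph V) (v : V) : Prop :=
  (G.neighborSet v).ncard = 1

/-- `G` has a perfect matching consisting of pendant edges. -/
def SimpleGraph.HasPendantPerfectMatching {V : Type*} (G : SimpleGraph V) : Prop :=
  ∃ M : G.Subgraph, M.IsPerfectMatching ∧ ∀ e ∈ M.edgeSet, ∃ v ∈ e, G.Pendant v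

/-- A simplicial vertex: its neighborhood induces a clique. -/
def SimpleGraph.IsSimplicial {V : Type*} (G : SimpleGraph V) (v : V) : Prop :=
  G.IsClique (G.neighborSet v)

/-- `G` is well-covered: every maximal stable set is maximum. -/
def SimpleGraph.WellCovered {V : Type*} (G : SimpleGraph V) : Prop :=
  ∀ s : Finset V, G.IsMaximalStable s → s.card = G.alpha

/-- `G` is very well-covered: well-covered, no isolated vertices, `|V| = 2α`. -/
def SimpleGraph.VeryWellCovered {V : Type*} [Fintype V] (G : SimpleGraph V) : Prop :=
  G.WellCovered ∧ (∀ v : V, (G.neighborSet v).ncard ≠ 0) ∧ Fintype.card V = 2 * G.alpha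

section Aux
open Classical
set_option linter.unusedSectionVars false
variable {V : Type*} [Fintype V] (T : SimpleGraph V)

noncomputable def NbU (U : Finset V) (v : V) : Finset V := U.filter (fun w => T.Adj v w)

def MaxIn (U S : Finset V) : Prop :=
  S ⊆ U ∧ T.IsStableSet ↑S ∧ ∀ v ∈ U, v ∉ S → ∃ w ∈ S, T.Adj v w

def WC (U : Finset V) : Prop := ∀ S S', MaxIn T U S → MaxIn T U S' → S.card = S'.card

variable {T}

lemma mem_NbU {U : Finset V} {v w : V} : w ∈ NbU T U v ↔ w ∈ U ∧ T.Adj v w := by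
  simp [NbU]

lemma stable_iff {S : Finset V} :
    T.IsStableSet ↑S ↔ ∀ u ∈ S, ∀ w ∈ S, ¬ T.Adj u w := by
  constructor
  · intro h u hu w hw hadj
    exact h hu hw (T.ne_of_adj hadj) hadj
  · intro h u hu w hw _ hadj
    exact h u hu w hw hadj

/-- extend a stable subset of `U` to a maximal one. -/
lemma exists_maxIn_extend {U S0 : Finset V} (hsub : S0 ⊆ U) (hst : T.IsStableSet ↑S0) :
    ∃ S, MaxIn T U S ∧ S0 ⊆ S := by
  classical
  have hne : (U.powerset.filter (fun S => S0 ⊆ S ∧ T.IsStableSet ↑S)).Nonempty :=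
    ⟨S0, by simp [hsub, hst, Finset.mem_powerset]⟩
  obtain ⟨S, hS, hmax⟩ := Finset.exists_max_image _ Finset.card hne
  simp only [Finset.mem_filter, Finset.mem_powerset] at hS
  obtain ⟨hSU, hS0S, hSst⟩ := hS
  refine ⟨S, ⟨hSU, hSst, ?_⟩, hS0S⟩
  intro v hv hvS
  by_contra hno
  push_neg at hno
  have hstin : T.IsStableSet ↑(insert v S) := by
    rw [Finset.coe_insert]
    show (insert v (↑S : Set V)).Pairwise fun u w => ¬ T.Adj u w
    have hsymm : Symmetric fun u w => ¬ T.Adj u w := fun a b h hadj => h hadj.symm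
    haveI : Std.Symm (fun u w : V => ¬ T.Adj u w) := ⟨fun a b h => hsymm h⟩
    rw [Set.pairwise_insert_of_symm]
    exact ⟨hSst, fun b hb _ hadj => hno b hb hadj⟩
  have hmem : insert v S ∈ U.powerset.filter (fun S => S0 ⊆ S ∧ T.IsStableSet ↑S) := by
    simp only [Finset.mem_filter, Finset.mem_powerset]
    exact ⟨Finset.insert_subset hv hSU, hS0S.trans (Finset.subset_insert _ _), hstin⟩
  have := hmax _ hmem
  rw [Finset.card_insert_of_notMem hvS] at this
  omega

/-- a stem has at most one leaf neighbour in a "well-covered" `U`. -/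
lemma step1 {U : Finset V} (hWC : WC T U) {s l1 l2 : V} (hl1 : l1 ∈ U) (hl2 : l2 ∈ U)
    (h1 : NbU T U l1 = {s}) (h2 : NbU T U l2 = {s}) (hne : l1 ≠ l2) : False := by
  classical
  have hsU : s ∈ U := (mem_NbU.1 (h1 ▸ Finset.mem_singleton_self s)).1
  have hadj1 : T.Adj l1 s := (mem_NbU.1 (h1 ▸ Finset.mem_singleton_self s)).2
  have hadj2 : T.Adj l2 s := (mem_NbU.1 (h2 ▸ Finset.mem_singleton_self s)).2
  -- the only `U`-neighbour of `l1`, `l2` is `s`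
  have honly1 : ∀ x ∈ U, T.Adj l1 x → x = s := fun x hx hadj =>
    Finset.mem_singleton.1 (h1 ▸ mem_NbU.2 ⟨hx, hadj⟩)
  have honly2 : ∀ x ∈ U, T.Adj l2 x → x = s := fun x hx hadj =>
    Finset.mem_singleton.1 (h2 ▸ mem_NbU.2 ⟨hx, hadj⟩)
  have hsingle : T.IsStableSet ↑({s} : Finset V) := stable_iff.2 (by
    intro u hu w hw hadj
    simp only [Finset.mem_singleton] at hu hw
    subst hu; subst hw; exact T.irrefl hadj)
  obtain ⟨S, hS, hsS⟩ := exists_maxIn_extend (Finset.singleton_subset_iff.2 hsU) hsingle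
  have hsS : s ∈ S := hsS (Finset.mem_singleton_self s)
  obtain ⟨hSU, hSst, hSdom⟩ := hS
  have hstS := stable_iff.1 hSst
  have hl1S : l1 ∉ S := fun h => hstS l1 h s hsS hadj1
  have hl2S : l2 ∉ S := fun h => hstS l2 h s hsS hadj2
  -- the exchange set
  set S2 : Finset V := insert l1 (insert l2 (S.erase s)) with hS2
  have hS2U : S2 ⊆ U := by
    refine Finset.insert_subset hl1 (Finset.insert_subset hl2 ?_)
    exact (Finset.erase_subset _ _).trans hSU
  have hS2st : T.IsStableSet ↑S2 := by
    rw [stable_iff]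
    intro u hu w hw hadj
    simp only [hS2, Finset.mem_insert, Finset.mem_erase] at hu hw
    have hs_not : ∀ x, x = l1 ∨ x = l2 ∨ x ≠ s ∧ x ∈ S → x ≠ s := by
      rintro x (rfl | rfl | ⟨h, _⟩)
      · exact T.ne_of_adj hadj1
      · exact T.ne_of_adj hadj2
      · exact h
    have hUmem : ∀ x, x = l1 ∨ x = l2 ∨ x ≠ s ∧ x ∈ S → x ∈ U := by
      rintro x (rfl | rfl | ⟨_, h⟩)
      · exact hl1
      · exact hl2
      · exact hSU h
    rcases hu with rfl | rfl | ⟨hus, huS⟩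
    · exact hs_not w hw (honly1 _ (hUmem w hw) hadj)
    · exact hs_not w hw (honly2 _ (hUmem w hw) hadj)
    · rcases hw with rfl | rfl | ⟨hws, hwS⟩
      · exact hus (honly1 _ (hSU huS) hadj.symm)
      · exact hus (honly2 _ (hSU huS) hadj.symm)
      · exact hstS _ huS _ hwS hadj
  obtain ⟨S3, hS3, hsubS3⟩ := exists_maxIn_extend hS2U hS2st
  have hcard2 : S2.card = S.card + 1 := by
    have h1' : l1 ∉ insert l2 (S.erase s) := by
      simp only [Finset.mem_insert, Finset.mem_erase]
      rintro (rfl | ⟨_, h⟩)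
      · exact hne rfl
      · exact hl1S h
    have h2' : l2 ∉ S.erase s := by
      simp only [Finset.mem_erase]; rintro ⟨_, h⟩; exact hl2S h
    rw [hS2, Finset.card_insert_of_notMem h1', Finset.card_insert_of_notMem h2',
      Finset.card_erase_of_mem hsS]
    have : 1 ≤ S.card := Finset.card_pos.2 ⟨s, hsS⟩
    omega
  have heq := hWC S S3 ⟨hSU, hSst, hSdom⟩ hS3
  have hle : S2.card ≤ S3.card := Finset.card_le_card hsubS3
  omega

end Aux

section P2
set_option linter.unusedSectionVars false
variable {V : Type*} [Fintype V] {T : SimpleGraph V}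

lemma chord2 (ha : T.IsAcyclic) {s b z z' : V} {q : T.Walk s b} (hq : q.IsPath)
    (hzs : T.Adj z s) (hzq : z ∉ q.support) (hz' : z' ∈ q.support) (hadj : T.Adj z' z) :
    z' = s := by
  classical
  by_contra hne
  have hw1path : (q.takeUntil z' hz').IsPath := hq.takeUntil hz'
  have hzw1 : z ∉ (q.takeUntil z' hz').support := fun h =>
    hzq (Walk.support_takeUntil_subset _ _ h)
  have hinner : (Walk.cons hzs (q.takeUntil z' hz')).IsPath :=
    (Walk.cons_isPath_iff _ _).2 ⟨hw1path, hzw1⟩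
  have hcyc : (Walk.cons hadj (Walk.cons hzs (q.takeUntil z' hz'))).IsCycle := by
    rw [Walk.cons_isCycle_iff]
    refine ⟨hinner, ?_⟩
    rw [Walk.edges_cons]
    simp only [List.mem_cons]
    rintro (he | he)
    · rw [Sym2.eq_iff] at he
      rcases he with ⟨h1', h2'⟩ | ⟨h1', h2'⟩
      · exact T.ne_of_adj hzs (h2' ▸ h1' ▸ rfl : z = s) |>.elim
      · exact hne h1'
    · exact hzw1 (Walk.snd_mem_support_of_mem_edges _ he)
  exact ha _ hcyc

lemma exists_max_path {U : Finset V} {v : V} (hv : v ∈ U) :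
    ∃ (a b : V) (p : T.Walk a b), p.IsPath ∧ (∀ x ∈ p.support, x ∈ U) ∧ v ∈ p.support ∧
      ∀ (c d : V) (q : T.Walk c d), q.IsPath → (∀ x ∈ q.support, x ∈ U) → v ∈ q.support →
        q.length ≤ p.length := by
  classical
  set Q : ℕ → Prop := fun n => ∃ (a b : V) (p : T.Walk a b), p.IsPath ∧
    (∀ x ∈ p.support, x ∈ U) ∧ v ∈ p.support ∧ p.length = n with hQ
  have h0 : Q 0 := ⟨v, v, Walk.nil, by simp, by simpa using hv, by simp, rfl⟩
  have hne : ((Finset.range (Fintype.card V + 1)).filter Q).Nonempty := ⟨0, by simp [h0]⟩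
  have hmem := Finset.max'_mem _ hne
  rw [Finset.mem_filter] at hmem
  obtain ⟨a, b, p, hp, hsup, hvp, hlen⟩ := hmem.2
  refine ⟨a, b, p, hp, hsup, hvp, ?_⟩
  intro c d q hq hsupq hvq
  have hQq : Q q.length := ⟨c, d, q, hq, hsupq, hvq, rfl⟩
  have hqmem : q.length ∈ (Finset.range (Fintype.card V + 1)).filter Q := by
    rw [Finset.mem_filter, Finset.mem_range]
    exact ⟨Nat.lt_succ_of_lt hq.length_lt, hQq⟩
  have := Finset.le_max' _ _ hqmem
  omega

end P2

section P3
set_option linter.unusedSectionVars false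
set_option maxHeartbeats 1000000
variable {V : Type*} [Fintype V] {T : SimpleGraph V}

lemma maxpath_first {U : Finset V} {v a b : V} (ha : T.IsAcyclic) {p : T.Walk a b}
    (hp : p.IsPath) (hsupU : ∀ x ∈ p.support, x ∈ U) (hvp : v ∈ p.support)
    (hmax : ∀ (c d : V) (q : T.Walk c d), q.IsPath → (∀ x ∈ q.support, x ∈ U) →
      v ∈ q.support → q.length ≤ p.length) :
    ∀ z, z ∈ U → T.Adj a z → z = p.getVert 1 := by
  classical
  intro z hzU hadj
  cases p with
  | nil =>
    exfalso
    have hzs : z ∉ (Walk.nil : T.Walk a a).support := by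
      simp [Walk.support_nil]
      exact fun h => T.ne_of_adj hadj h.symm
    have hq : (Walk.cons hadj.symm (Walk.nil : T.Walk a a)).IsPath := by
      rw [Walk.cons_isPath_iff]
      exact ⟨Walk.IsPath.nil, hzs⟩
    have := hmax _ _ _ hq (by
      intro x hx
      simp [Walk.support_cons, Walk.support_nil] at hx
      rcases hx with rfl | rfl
      · exact hzU
      · exact hsupU _ (by simp))
      (by
        have hva : v = a := by simpa [Walk.support_nil] using hvp
        simp [Walk.support_cons, Walk.support_nil, hva])
    simp [Walk.length_cons, Walk.length_nil] at this
  | cons h q =>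
    rename_i c
    rw [Walk.getVert_cons_succ, Walk.getVert_zero]
    rw [Walk.cons_isPath_iff] at hp
    by_cases hzc : z = c
    · exact hzc
    · exfalso
      by_cases hzsup : z ∈ (Walk.cons h q).support
      · have hzq : z ∈ q.support := by
          rcases (Walk.mem_support_iff _).1 hzsup with rfl | h'
          · exact absurd rfl (T.ne_of_adj hadj)
          · exact h'
        exact hzc (chord2 ha hp.1 h hp.2 hzq hadj.symm)
      · have hq' : (Walk.cons hadj.symm (Walk.cons h q)).IsPath := by
          rw [Walk.cons_isPath_iff]
          exact ⟨(Walk.cons_isPath_iff _ _).2 hp, hzsup⟩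
        have := hmax _ _ _ hq' (by
          intro x hx
          rw [Walk.support_cons, List.mem_cons] at hx
          rcases hx with rfl | hx
          · exact hzU
          · exact hsupU x hx)
          (by rw [Walk.support_cons]; exact List.mem_cons_of_mem _ hvp)
        simp [Walk.length_cons] at this

end P3

section P4
open Classical
set_option linter.unusedSectionVars false
set_option maxHeartbeats 1000000
variable {V : Type*} [Fintype V] {T : SimpleGraph V}

lemma configC {U : Finset V} (hWC : WC T U) {l s g v w : V}
    (hl : NbU T U l = {s}) (hs : NbU T U s = {l, g}) (hg : NbU T U g = {s, v})
    (hlg : l ≠ g) (hvs : v ≠ s)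
    (hwmem : w ∈ NbU T U v) (hwg : w ≠ g) : False := by
  classical
  have hlU : l ∈ U := (mem_NbU.1 (hs ▸ (Finset.mem_insert_self l {g}))).1
  have hadj_sl : T.Adj s l := (mem_NbU.1 (hs ▸ (Finset.mem_insert_self l {g}))).2
  have hgmem : g ∈ NbU T U s := hs ▸ (Finset.mem_insert_of_mem (Finset.mem_singleton_self g))
  have hgU : g ∈ U := (mem_NbU.1 hgmem).1
  have hadj_sg : T.Adj s g := (mem_NbU.1 hgmem).2
  have hsU : s ∈ U := (mem_NbU.1 (hl ▸ Finset.mem_singleton_self s)).1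
  have hadj_ls : T.Adj l s := (mem_NbU.1 (hl ▸ Finset.mem_singleton_self s)).2
  have hvmem : v ∈ NbU T U g := hg ▸ (Finset.mem_insert_of_mem (Finset.mem_singleton_self v))
  have hvU : v ∈ U := (mem_NbU.1 hvmem).1
  have hadj_gv : T.Adj g v := (mem_NbU.1 hvmem).2
  have hwU : w ∈ U := (mem_NbU.1 hwmem).1
  have hadj_vw : T.Adj v w := (mem_NbU.1 hwmem).2
  -- memberships in the three "closed neighbourhoods"
  have honl : ∀ x ∈ U, T.Adj l x → x = s := fun x hx h =>
    Finset.mem_singleton.1 (hl ▸ mem_NbU.2 ⟨hx, h⟩)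
  have hons : ∀ x ∈ U, T.Adj s x → x = l ∨ x = g := fun x hx h => by
    have := hs ▸ mem_NbU.2 ⟨hx, h⟩
    simpa using this
  have hong : ∀ x ∈ U, T.Adj g x → x = s ∨ x = v := fun x hx h => by
    have := hg ▸ mem_NbU.2 ⟨hx, h⟩
    simpa using this
  -- distinctness
  have hvg : v ≠ g := fun h => T.irrefl (h ▸ hadj_gv)
  have hvl : v ≠ l := by
    rintro rfl
    have hgs : g = s := honl g hgU hadj_gv.symm
    subst hgs
    exact T.irrefl hadj_sg
  have hwl : w ≠ l := by
    rintro rfl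
    exact hvs (honl v hvU hadj_vw.symm)
  have hws : w ≠ s := by
    rintro rfl
    rcases hons v hvU hadj_vw.symm with rfl | rfl
    · exact hvl rfl
    · exact hvg rfl
  -- the stable set {l, g, w}
  have hstable : T.IsStableSet ↑({l, g, w} : Finset V) := by
    rw [stable_iff]
    have key : ∀ x y : V, (x = l ∨ x = g ∨ x = w) → (y = l ∨ y = g ∨ y = w) →
        T.Adj x y → False := by
      have hnlg : ¬ T.Adj l g := by
        intro hadj
        have hgs : g = s := honl g hgU hadj
        subst hgs
        exact T.irrefl hadj_sg
      have hnlw : ¬ T.Adj l w := fun hadj => hws (honl w hwU hadj)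
      have hngw : ¬ T.Adj g w := by
        intro hadj
        rcases hong w hwU hadj with rfl | rfl
        · exact hws rfl
        · exact T.irrefl hadj_vw
      rintro x y (rfl | rfl | rfl) (rfl | rfl | rfl) hadj
      · exact T.irrefl hadj
      · exact hnlg hadj
      · exact hnlw hadj
      · exact hnlg hadj.symm
      · exact T.irrefl hadj
      · exact hngw hadj
      · exact hnlw hadj.symm
      · exact hngw hadj.symm
      · exact T.irrefl hadj
    intro x hx y hy hadj
    simp only [Finset.mem_insert, Finset.mem_singleton] at hx hy
    exact key x y hx hy hadj
  -- extend to a maximal stable set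
  have hsub3 : ({l, g, w} : Finset V) ⊆ U := by
    intro x hx
    simp only [Finset.mem_insert, Finset.mem_singleton] at hx
    rcases hx with rfl | rfl | rfl
    · exact hlU
    · exact hgU
    · exact hwU
  obtain ⟨S, hS, hsubS⟩ := exists_maxIn_extend hsub3 hstable
  obtain ⟨hSU, hSst, hSdom⟩ := hS
  have hstS := stable_iff.1 hSst
  have hlS : l ∈ S := hsubS (by simp)
  have hgS : g ∈ S := hsubS (by simp)
  have hwS : w ∈ S := hsubS (by simp)
  have hsS : s ∉ S := fun h => hstS l hlS s h hadj_ls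
  have hvS : v ∉ S := fun h => hstS g hgS v h hadj_gv
  -- the exchange set S' = insert s (S \ {l, g})
  set S' : Finset V := insert s ((S.erase l).erase g) with hS'def
  have hS'sub : S' ⊆ U := by
    refine Finset.insert_subset hsU ?_
    exact ((Finset.erase_subset _ _).trans (Finset.erase_subset _ _)).trans hSU
  have hmemS' : ∀ x, x ∈ S' ↔ x = s ∨ (x ≠ g ∧ x ≠ l ∧ x ∈ S) := by
    intro x
    simp [hS'def, Finset.mem_insert, Finset.mem_erase]
  have hS'st : T.IsStableSet ↑S' := by
    rw [stable_iff]
    intro x hx y hy hadj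
    rw [hmemS'] at hx hy
    rcases hx with rfl | ⟨hxg, hxl, hxS⟩
    · rcases hy with rfl | ⟨hyg, hyl, hyS⟩
      · exact T.irrefl hadj
      · rcases hons y (hSU hyS) hadj with rfl | rfl
        · exact hyl rfl
        · exact hyg rfl
    · rcases hy with rfl | ⟨hyg, hyl, hyS⟩
      · rcases hons x (hSU hxS) hadj.symm with rfl | rfl
        · exact hxl rfl
        · exact hxg rfl
      · exact hstS x hxS y hyS hadj
  have hS'dom : ∀ x ∈ U, x ∉ S' → ∃ y ∈ S', T.Adj x y := by
    intro x hxU hxS'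
    have hxs : x ≠ s := fun h => hxS' ((hmemS' x).2 (Or.inl h))
    by_cases hxS : x ∈ S
    · -- x ∈ S, x ∉ S' : so x = l or x = g
      have : x = g ∨ x = l := by
        by_contra hc
        push_neg at hc
        exact hxS' ((hmemS' x).2 (Or.inr ⟨hc.1, hc.2, hxS⟩))
      refine ⟨s, (hmemS' s).2 (Or.inl rfl), ?_⟩
      rcases this with rfl | rfl
      · exact hadj_sg.symm
      · exact hadj_ls
    · obtain ⟨y, hyS, hxy⟩ := hSdom x hxU hxS
      by_cases hyl : y = l
      · subst hyl
        exact absurd (honl x hxU hxy.symm) hxs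
      by_cases hyg : y = g
      · subst hyg
        rcases hong x hxU hxy.symm with rfl | rfl
        · exact absurd rfl hxs
        · exact ⟨w, (hmemS' w).2 (Or.inr ⟨hwg, hwl, hwS⟩), hadj_vw⟩
      · exact ⟨y, (hmemS' y).2 (Or.inr ⟨hyg, hyl, hyS⟩), hxy⟩
  -- cardinalities
  have hcard : S'.card + 1 = S.card := by
    have hgel : g ∈ S.erase l := Finset.mem_erase.2 ⟨fun h => hlg h.symm, hgS⟩
    have hsnot : s ∉ (S.erase l).erase g := fun h =>
      hsS (Finset.mem_of_mem_erase (Finset.mem_of_mem_erase h))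
    rw [hS'def, Finset.card_insert_of_notMem hsnot, Finset.card_erase_of_mem hgel,
      Finset.card_erase_of_mem hlS]
    have h1 : 2 ≤ S.card := Finset.one_lt_card.2 ⟨l, hlS, g, hgS, hlg⟩
    omega
  have := hWC S S' ⟨hSU, hSst, hSdom⟩ ⟨hS'sub, hS'st, hS'dom⟩
  omega


end P4

section P5
open Classical
set_option linter.unusedSectionVars false
set_option maxHeartbeats 1600000
variable {V : Type*} [Fintype V] {T : SimpleGraph V}

lemma main_lemma (ha : T.IsAcyclic) : ∀ (n : ℕ) (U : Finset V), U.card ≤ n → WC T U →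
    ∀ v ∈ U, (NbU T U v).Nonempty →
    (NbU T U v).card = 1 ∨ ∃ w ∈ NbU T U v, (NbU T U w).card = 1 := by
  classical
  intro n
  induction n with
  | zero =>
    intro U hU _ v hv _
    have : U = ∅ := Finset.card_eq_zero.1 (Nat.le_zero.1 hU)
    exact absurd (this ▸ hv) (Finset.notMem_empty v)
  | succ n ih =>
    intro U hUcard hWC v hvU hvne
    by_contra hgoal
    push_neg at hgoal
    obtain ⟨hv_not_leaf, hv_not_stem⟩ := hgoal
    have hvdeg : 2 ≤ (NbU T U v).card := by
      have h1 : 1 ≤ (NbU T U v).card := Finset.card_pos.2 hvne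
      have h2 := hv_not_leaf
      omega
    obtain ⟨a, b, p, hp, hsupU, hvp, hmax⟩ := exists_max_path (T := T) hvU
    have hfirst := maxpath_first ha hp hsupU hvp hmax
    cases p with
    | nil =>
      obtain ⟨z, hz⟩ := hvne
      obtain ⟨hzU, hadjz⟩ := mem_NbU.1 hz
      have hva : v = a := by simpa using hvp
      subst hva
      have := hfirst z hzU hadjz
      simp at this
      subst this
      exact T.irrefl hadjz
    | cons h1 q =>
      rename_i s0
      have haU : a ∈ U := hsupU a (by simp)
      have hs0U : s0 ∈ U := hsupU s0 (by simp)
      have hgv1 : (Walk.cons h1 q).getVert 1 = s0 := by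
        simp [Walk.getVert_cons_succ]
      have hNa : NbU T U a = {s0} := by
        apply Finset.eq_singleton_iff_unique_mem.2
        refine ⟨mem_NbU.2 ⟨hs0U, h1⟩, ?_⟩
        intro z hz
        obtain ⟨hzU, hadjz⟩ := mem_NbU.1 hz
        exact (hfirst z hzU hadjz).trans hgv1
      have hva : v ≠ a := by
        rintro rfl
        exact hv_not_leaf (by rw [hNa]; simp)
      cases q with
      | nil =>
        -- single edge a - s0 (= b); v must be s0, which is a leaf: contradiction
        exfalso
        have hvs0 : v = b := by
          have hmem2 : v ∈ [a, b] := by simpa [Walk.support_cons] using hvp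
          simp at hmem2
          rcases hmem2 with rfl | rfl
          · exact absurd rfl hva
          · rfl
        subst hvs0
        -- reverse path
        have hrevpath : (Walk.cons h1.symm (Walk.nil : T.Walk a a)).IsPath := by
          rw [Walk.cons_isPath_iff]
          refine ⟨Walk.IsPath.nil, ?_⟩
          simp
          exact T.ne_of_adj h1.symm
        have hrevsup : ∀ x ∈ (Walk.cons h1.symm (Walk.nil : T.Walk a a)).support, x ∈ U := by
          intro x hx
          simp [Walk.support_cons] at hx
          rcases hx with rfl | rfl
          · exact hvU
          · exact haU
        have hrevv : v ∈ (Walk.cons h1.symm (Walk.nil : T.Walk a a)).support := by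
          simp [Walk.support_cons]
        have hrevmax : ∀ (c d : V) (q : T.Walk c d), q.IsPath →
            (∀ x ∈ q.support, x ∈ U) → v ∈ q.support →
            q.length ≤ (Walk.cons h1.symm (Walk.nil : T.Walk a a)).length := by
          intro c d q hq hqs hqv
          have := hmax c d q hq hqs hqv
          simpa using this
        have hsecond := maxpath_first ha hrevpath hrevsup hrevv hrevmax
        have hNs0 : NbU T U v = {a} := by
          apply Finset.eq_singleton_iff_unique_mem.2
          refine ⟨mem_NbU.2 ⟨haU, h1.symm⟩, ?_⟩
          intro z hz
          obtain ⟨hzU, hadjz⟩ := mem_NbU.1 hz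
          have := hsecond z hzU hadjz
          simpa [Walk.getVert_cons_succ, Walk.getVert_zero] using this
        exact hv_not_leaf (by rw [hNs0]; simp)
      | cons h2 r =>
        rename_i g
        -- p = a :: s0 :: r, h1 : Adj a s0, h2 : Adj s0 g, r : Walk g b
        have hgU : g ∈ U := hsupU g (by simp)
        have hq2path : (Walk.cons h2 r).IsPath ∧ a ∉ (Walk.cons h2 r).support :=
          (Walk.cons_isPath_iff _ _).1 hp
        have hrpath : r.IsPath ∧ s0 ∉ r.support := (Walk.cons_isPath_iff _ _).1 hq2path.1
        have hNs : NbU T U s0 = {a, g} := by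
          apply Finset.Subset.antisymm
          · intro z hz
            obtain ⟨hzU, hadjz⟩ := mem_NbU.1 hz
            simp only [Finset.mem_insert, Finset.mem_singleton]
            by_contra hc
            push_neg at hc
            obtain ⟨hza, hzg⟩ := hc
            by_cases hzsup : z ∈ (Walk.cons h1 (Walk.cons h2 r)).support
            · have hzr : z ∈ r.support := by
                simp only [Walk.support_cons, List.mem_cons] at hzsup
                rcases hzsup with rfl | rfl | h
                · exact absurd rfl hza
                · exact absurd rfl (T.ne_of_adj hadjz.symm)
                · exact h
              exact hzg (chord2 ha hrpath.1 h2 hrpath.2 hzr hadjz.symm)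
            · have hznq2 : z ∉ (Walk.cons h2 r).support := fun hmem' =>
                hzsup (by rw [Walk.support_cons]; exact List.mem_cons_of_mem _ hmem')
              by_cases hstem : ∃ z', z' ∈ U ∧ T.Adj z z' ∧ z' ≠ s0
              · obtain ⟨z', hz'U, hadjz', hz's⟩ := hstem
                by_cases hz'sup : z' ∈ (Walk.cons h1 (Walk.cons h2 r)).support
                · have hz'cases : z' = a ∨ z' ∈ (Walk.cons h2 r).support := by
                    rw [Walk.support_cons, List.mem_cons] at hz'sup
                    exact hz'sup
                  rcases hz'cases with hz'a | hz'q
                  · rw [hz'a] at hadjz'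
                    have hzmem : z ∈ NbU T U a := mem_NbU.2 ⟨hzU, hadjz'.symm⟩
                    rw [hNa, Finset.mem_singleton] at hzmem
                    exact (T.ne_of_adj hadjz.symm) hzmem
                  · exact hz's (chord2 ha hq2path.1 hadjz.symm hznq2 hz'q hadjz'.symm)
                · -- extension: z' - z - s0 - ...
                  exfalso
                  have hinner : (Walk.cons hadjz.symm (Walk.cons h2 r)).IsPath := by
                    rw [Walk.cons_isPath_iff]
                    exact ⟨hq2path.1, hznq2⟩
                  have houter : (Walk.cons hadjz'.symm (Walk.cons hadjz.symm
                      (Walk.cons h2 r))).IsPath := by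
                    rw [Walk.cons_isPath_iff]
                    refine ⟨hinner, ?_⟩
                    rw [Walk.support_cons, List.mem_cons]
                    rintro (rfl | hmem')
                    · exact T.irrefl hadjz'
                    · exact hz'sup (by rw [Walk.support_cons]
                                       exact List.mem_cons_of_mem _ hmem')
                  have hsup' : ∀ x ∈ (Walk.cons hadjz'.symm (Walk.cons hadjz.symm
                      (Walk.cons h2 r))).support, x ∈ U := by
                    intro x hx
                    rw [Walk.support_cons, List.mem_cons] at hx
                    rcases hx with rfl | hx
                    · exact hz'U
                    · rw [Walk.support_cons, List.mem_cons] at hx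
                      rcases hx with rfl | hx
                      · exact hzU
                      · exact hsupU x (by rw [Walk.support_cons]
                                          exact List.mem_cons_of_mem _ hx)
                  have hvsup' : v ∈ (Walk.cons hadjz'.symm (Walk.cons hadjz.symm
                      (Walk.cons h2 r))).support := by
                    have hvq2 : v ∈ (Walk.cons h2 r).support := by
                      rcases (by rw [Walk.support_cons, List.mem_cons] at hvp; exact hvp :
                        v = a ∨ v ∈ (Walk.cons h2 r).support) with rfl | hh
                      · exact absurd rfl hva
                      · exact hh
                    rw [Walk.support_cons, List.mem_cons]
                    right
                    rw [Walk.support_cons, List.mem_cons]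
                    exact Or.inr hvq2
                  have := hmax _ _ _ houter hsup' hvsup'
                  simp [Walk.length_cons] at this
              · push_neg at hstem
                have hNz : NbU T U z = {s0} := by
                  apply Finset.eq_singleton_iff_unique_mem.2
                  refine ⟨mem_NbU.2 ⟨hs0U, hadjz.symm⟩, ?_⟩
                  intro x hx
                  obtain ⟨hxU, hxadj⟩ := mem_NbU.1 hx
                  exact hstem x hxU hxadj
                have hane : a ≠ z := fun h =>
                  hzsup (h ▸ (by simp : a ∈ (Walk.cons h1 (Walk.cons h2 r)).support))
                exact step1 hWC haU hzU hNa hNz hane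
          · intro z hz
            simp only [Finset.mem_insert, Finset.mem_singleton] at hz
            rcases hz with rfl | rfl
            · exact mem_NbU.2 ⟨haU, h1.symm⟩
            · exact mem_NbU.2 ⟨hgU, h2⟩
        have hvs0 : v ≠ s0 := by
          rintro rfl
          exact hv_not_stem a (mem_NbU.2 ⟨haU, h1.symm⟩) (by rw [hNa]; simp)
        -- the reduced vertex set
        set U' := (U.erase a).erase s0 with hU'def
        have hU'mem : ∀ x, x ∈ U' ↔ x ∈ U ∧ x ≠ a ∧ x ≠ s0 := by
          intro x
          simp only [hU'def, Finset.mem_erase]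
          tauto
        have hU'card : U'.card ≤ n := by
          have hlt1 : (U.erase a).card < U.card := Finset.card_erase_lt_of_mem haU
          have hs0mem' : s0 ∈ U.erase a :=
            Finset.mem_erase.2 ⟨T.ne_of_adj h1.symm, hs0U⟩
          have hlt2 : U'.card < (U.erase a).card := Finset.card_erase_lt_of_mem hs0mem'
          omega
        have hWC' : WC T U' := by
          have hlift : ∀ S, MaxIn T U' S → MaxIn T U (insert a S) := by
            rintro S ⟨hSU', hSst, hSdom⟩
            refine ⟨Finset.insert_subset haU (hSU'.trans (fun x hx => ((hU'mem x).1 hx).1)),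
              ?_, ?_⟩
            · rw [Finset.coe_insert]
              show (insert a (↑S : Set V)).Pairwise fun u w => ¬ T.Adj u w
              have hsymm : Symmetric fun u w : V => ¬ T.Adj u w :=
                fun x y h hadj => h hadj.symm
              haveI : Std.Symm (fun u w : V => ¬ T.Adj u w) := ⟨fun a b h => hsymm h⟩
              rw [Set.pairwise_insert_of_symm]
              refine ⟨hSst, fun x hxS _ hadj => ?_⟩
              have hxU' := (hU'mem x).1 (hSU' hxS)
              have hxs0 : x = s0 := by
                have hmm := mem_NbU.2 ⟨hxU'.1, hadj⟩
                rw [hNa, Finset.mem_singleton] at hmm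
                exact hmm
              exact hxU'.2.2 hxs0
            · intro x hxU hxnot
              by_cases hxs0 : x = s0
              · refine ⟨a, Finset.mem_insert_self _ _, ?_⟩
                rw [hxs0]
                exact h1.symm
              · have hxa : x ≠ a := fun h => hxnot (h ▸ Finset.mem_insert_self a S)
                obtain ⟨y, hy, hxy⟩ := hSdom x ((hU'mem x).2 ⟨hxU, hxa, hxs0⟩)
                  (fun h => hxnot (Finset.mem_insert_of_mem h))
                exact ⟨y, Finset.mem_insert_of_mem hy, hxy⟩
          intro S S' hS hS'
          have hcc := hWC _ _ (hlift S hS) (hlift S' hS')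
          have haS : a ∉ S := fun hh => ((hU'mem a).1 (hS.1 hh)).2.1 rfl
          have haS' : a ∉ S' := fun hh => ((hU'mem a).1 (hS'.1 hh)).2.1 rfl
          rw [Finset.card_insert_of_notMem haS, Finset.card_insert_of_notMem haS'] at hcc
          omega
        have hvU' : v ∈ U' := (hU'mem v).2 ⟨hvU, hva, hvs0⟩
        have hvnota : a ∉ NbU T U v := by
          intro hmem'
          obtain ⟨_, hadj⟩ := mem_NbU.1 hmem'
          have hmm : v ∈ NbU T U a := mem_NbU.2 ⟨hvU, hadj.symm⟩
          rw [hNa, Finset.mem_singleton] at hmm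
          exact hvs0 hmm
        have hNbU' : ∀ x y : V, y ∈ NbU T U' x ↔ y ∈ NbU T U x ∧ y ≠ a ∧ y ≠ s0 := by
          intro x y
          simp only [mem_NbU, hU'mem]
          tauto
        by_cases hadj_vs : T.Adj v s0
        · -- then v = g
          have hvg : v = g := by
            have hmm : v ∈ NbU T U s0 := mem_NbU.2 ⟨hvU, hadj_vs.symm⟩
            rw [hNs] at hmm
            simp only [Finset.mem_insert, Finset.mem_singleton] at hmm
            rcases hmm with hmm | hmm
            · exact absurd hmm hva
            · exact hmm
          subst hvg
          by_cases hd2 : (NbU T U v).card = 2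
          · have hs0mem : s0 ∈ NbU T U v := mem_NbU.2 ⟨hs0U, hadj_vs⟩
            obtain ⟨w, hw⟩ := Finset.card_eq_one.1 (by
              rw [Finset.card_erase_of_mem hs0mem, hd2] : ((NbU T U v).erase s0).card = 1)
            have hNv : NbU T U v = {s0, w} := by
              rw [← Finset.insert_erase hs0mem, hw]
            have hws0 : w ≠ s0 := by
              have hmm : w ∈ (NbU T U v).erase s0 := hw ▸ Finset.mem_singleton_self w
              exact (Finset.mem_erase.1 hmm).1
            have hwmemv : w ∈ NbU T U v := by rw [hNv]; simp
            have hvmemw : v ∈ NbU T U w :=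
              mem_NbU.2 ⟨hvU, (mem_NbU.1 hwmemv).2.symm⟩
            have hwbig : 1 < (NbU T U w).card := by
              have hh1 : 1 ≤ (NbU T U w).card := Finset.card_pos.2 ⟨v, hvmemw⟩
              have hh2 := hv_not_stem w hwmemv
              omega
            obtain ⟨w', hw'mem, hw'v⟩ := Finset.exists_mem_ne hwbig v
            exact configC hWC hNa hNs hNv (Ne.symm hva) hws0 hw'mem hw'v
          · have hd3 : 3 ≤ (NbU T U v).card := by omega
            have hs0mem : s0 ∈ NbU T U v := mem_NbU.2 ⟨hs0U, hadj_vs⟩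
            have hNv' : NbU T U' v = (NbU T U v).erase s0 := by
              ext y
              rw [hNbU' v y, Finset.mem_erase]
              constructor
              · rintro ⟨hy, _, hys0⟩
                exact ⟨hys0, hy⟩
              · rintro ⟨hys0, hy⟩
                refine ⟨hy, ?_, hys0⟩
                rintro rfl
                exact hvnota hy
            have hcard2' : 2 ≤ (NbU T U' v).card := by
              rw [hNv', Finset.card_erase_of_mem hs0mem]
              omega
            have hih := ih U' hU'card hWC' v hvU' (Finset.card_pos.1 (by omega))
            rcases hih with h1' | ⟨y, hymem, hyleaf⟩
            · omega
            · obtain ⟨hy1, hya, hys0⟩ := (hNbU' v y).1 hymem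
              have hyadj : T.Adj v y := (mem_NbU.1 hy1).2
              have hyU : y ∈ U := (mem_NbU.1 hy1).1
              have hybig : 2 ≤ (NbU T U y).card := by
                have hh1 : 1 ≤ (NbU T U y).card :=
                  Finset.card_pos.2 ⟨v, mem_NbU.2 ⟨hvU, hyadj.symm⟩⟩
                have hh2 := hv_not_stem y hy1
                omega
              -- y must be adjacent to a or s0
              by_cases hyas0 : (∀ x ∈ NbU T U y, x ≠ a ∧ x ≠ s0)
              · have heq : NbU T U' y = NbU T U y := by
                  ext x
                  rw [hNbU' y x]
                  exact ⟨fun hh => hh.1, fun hh => ⟨hh, (hyas0 x hh).1, (hyas0 x hh).2⟩⟩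
                rw [heq] at hyleaf
                omega
              · push_neg at hyas0
                obtain ⟨x, hxmem, hxor⟩ := hyas0
                obtain ⟨hxU, hxadj⟩ := mem_NbU.1 hxmem
                by_cases hxa : x = a
                · rw [hxa] at hxadj
                  have hmm : y ∈ NbU T U a := mem_NbU.2 ⟨hyU, hxadj.symm⟩
                  rw [hNa, Finset.mem_singleton] at hmm
                  exact hys0 hmm
                · have hxs0 : x = s0 := by tauto
                  rw [hxs0] at hxadj
                  have hmm : y ∈ NbU T U s0 := mem_NbU.2 ⟨hyU, hxadj.symm⟩
                  rw [hNs] at hmm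
                  simp only [Finset.mem_insert, Finset.mem_singleton] at hmm
                  rcases hmm with hmm | hmm
                  · exact hya hmm
                  · exact T.irrefl (v := v) (hmm ▸ hyadj)
        · -- v not adjacent to s0
          have hNv' : NbU T U' v = NbU T U v := by
            ext y
            rw [hNbU' v y]
            refine ⟨fun hh => hh.1, fun hh => ⟨hh, ?_, ?_⟩⟩
            · rintro rfl
              exact hvnota hh
            · rintro rfl
              exact hadj_vs (mem_NbU.1 hh).2
          have hih := ih U' hU'card hWC' v hvU' (by rw [hNv']; exact hvne)
          rcases hih with h1' | ⟨y, hymem, hyleaf⟩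
          · rw [hNv'] at h1'
            omega
          · obtain ⟨hy1, hya, hys0⟩ := (hNbU' v y).1 hymem
            have hyadj : T.Adj v y := (mem_NbU.1 hy1).2
            have hyU : y ∈ U := (mem_NbU.1 hy1).1
            have hybig : 2 ≤ (NbU T U y).card := by
              have hh1 : 1 ≤ (NbU T U y).card :=
                Finset.card_pos.2 ⟨v, mem_NbU.2 ⟨hvU, hyadj.symm⟩⟩
              have hh2 := hv_not_stem y hy1
              omega
            by_cases hyas0 : (∀ x ∈ NbU T U y, x ≠ a ∧ x ≠ s0)
            · have heq : NbU T U' y = NbU T U y := by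
                ext x
                rw [hNbU' y x]
                exact ⟨fun hh => hh.1, fun hh => ⟨hh, (hyas0 x hh).1, (hyas0 x hh).2⟩⟩
              rw [heq] at hyleaf
              omega
            · push_neg at hyas0
              obtain ⟨x, hxmem, hxor⟩ := hyas0
              obtain ⟨hxU, hxadj⟩ := mem_NbU.1 hxmem
              by_cases hxa : x = a
              · rw [hxa] at hxadj
                have hmm : y ∈ NbU T U a := mem_NbU.2 ⟨hyU, hxadj.symm⟩
                rw [hNa, Finset.mem_singleton] at hmm
                exact hys0 hmm
              · have hxs0 : x = s0 := by tauto
                rw [hxs0] at hxadj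
                have hmm : y ∈ NbU T U s0 := mem_NbU.2 ⟨hyU, hxadj.symm⟩
                rw [hNs] at hmm
                simp only [Finset.mem_insert, Finset.mem_singleton] at hmm
                rcases hmm with hmm | hmm
                · exact absurd hmm hya
                · -- y = g
                  rw [← hmm] at hNs
                  have hanotg : a ∉ NbU T U y := by
                    intro hmem'
                    obtain ⟨_, hadj'⟩ := mem_NbU.1 hmem'
                    have hmm2 : y ∈ NbU T U a := mem_NbU.2 ⟨hyU, hadj'.symm⟩
                    rw [hNa, Finset.mem_singleton] at hmm2
                    exact hys0 hmm2
                  have hNg' : NbU T U' y = (NbU T U y).erase s0 := by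
                    ext x
                    rw [hNbU' y x, Finset.mem_erase]
                    constructor
                    · rintro ⟨hx1, _, hx3⟩
                      exact ⟨hx3, hx1⟩
                    · rintro ⟨hx3, hx1⟩
                      refine ⟨hx1, ?_, hx3⟩
                      rintro rfl
                      exact hanotg hx1
                  have hs0memg : s0 ∈ NbU T U y := mem_NbU.2 ⟨hs0U, hxadj⟩
                  have hcardg : (NbU T U y).card = 2 := by
                    rw [hNg'] at hyleaf
                    rw [Finset.card_erase_of_mem hs0memg] at hyleaf
                    omega
                  have hvmemg : v ∈ NbU T U y := mem_NbU.2 ⟨hvU, hyadj.symm⟩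
                  have hsub2 : ({s0, v} : Finset V) ⊆ NbU T U y := by
                    intro x hx
                    simp only [Finset.mem_insert, Finset.mem_singleton] at hx
                    rcases hx with rfl | rfl
                    · exact hs0memg
                    · exact hvmemg
                  have hNg : NbU T U y = {s0, v} := by
                    symm
                    apply Finset.eq_of_subset_of_card_le hsub2
                    rw [hcardg, Finset.card_insert_of_notMem (by
                      simp only [Finset.mem_singleton]
                      exact fun h => hvs0 h.symm), Finset.card_singleton]
                  have hyg : y ∈ NbU T U v := hy1
                  have hvbig : 1 < (NbU T U v).card := by omega
                  obtain ⟨w, hwmem, hwg⟩ := Finset.exists_mem_ne hvbig y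
                  exact configC hWC hNa hNs hNg (fun h => hya h.symm) hvs0 hwmem hwg

end P5

section P6
open Classical
set_option linter.unusedSectionVars false
set_option maxHeartbeats 1600000
variable {V : Type*} [Fintype V] {T : SimpleGraph V}

lemma alpha_bddAbove (G : SimpleGraph V) :
    BddAbove {n | ∃ s : Finset V, G.IsStableSet ↑s ∧ s.card = n} :=
  ⟨Fintype.card V, fun n hn => by obtain ⟨s, _, rfl⟩ := hn; exact Finset.card_le_univ s⟩

lemma alpha_nonempty (G : SimpleGraph V) :
    {n | ∃ s : Finset V, G.IsStableSet ↑s ∧ s.card = n}.Nonempty :=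
  ⟨0, ∅, by simp [SimpleGraph.IsStableSet], Finset.card_empty⟩

lemma card_le_alpha {G : SimpleGraph V} {s : Finset V} (hs : G.IsStableSet ↑s) :
    s.card ≤ G.alpha := le_csSup (alpha_bddAbove G) ⟨s, hs, rfl⟩

lemma exists_alpha_set (G : SimpleGraph V) :
    ∃ s : Finset V, G.IsStableSet ↑s ∧ s.card = G.alpha :=
  Nat.sSup_mem (alpha_nonempty G) (alpha_bddAbove G)

lemma sq_alpha_le (G : SimpleGraph V) : G.sq.alpha ≤ G.alpha := by
  apply csSup_le_csSup (alpha_bddAbove G) (alpha_nonempty G.sq)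
  rintro n ⟨s, hst, hcard⟩
  exact ⟨s, fun {x} hx {y} hy hne hadj => hst hx hy hne (Or.inl hadj), hcard⟩

lemma maximal_dominates {s : Finset V} (h : T.IsMaximalStable s) :
    ∀ v, v ∉ s → ∃ w ∈ s, T.Adj v w := by
  intro v hv
  by_contra hno
  push_neg at hno
  apply h.2 v hv
  show (insert v (↑s : Set V)).Pairwise fun u w => ¬ T.Adj u w
  have hsymm : Symmetric fun u w : V => ¬ T.Adj u w := fun x y hh hadj => hh hadj.symm
  haveI : Std.Symm (fun u w : V => ¬ T.Adj u w) := ⟨fun a b h => hsymm h⟩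
  rw [Set.pairwise_insert_of_symm]
  exact ⟨h.1, fun b hb _ hadj => hno b (Finset.mem_coe.1 hb) hadj⟩

theorem sqstable_to_wc (hsq : T.SquareStable) : T.WellCovered := by
  classical
  intro s hs
  have hle : s.card ≤ T.alpha := card_le_alpha hs.1
  obtain ⟨P, hPst, hPcard⟩ := exists_alpha_set T.sq
  have hdom := maximal_dominates hs
  have hmap : ∀ p : V, ∃ w, (p ∈ s → w = p) ∧ (p ∉ s → w ∈ s ∧ T.Adj p w) := by
    intro p
    by_cases hp : p ∈ s
    · exact ⟨p, fun _ => rfl, fun h => absurd hp h⟩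
    · obtain ⟨w, hw, hadj⟩ := hdom p hp
      exact ⟨w, fun h => absurd h hp, fun _ => ⟨hw, hadj⟩⟩
  choose f hf1 hf2 using hmap
  have hmaps : ∀ p ∈ P, f p ∈ s := by
    intro p _
    by_cases hp : p ∈ s
    · rw [hf1 p hp]; exact hp
    · exact (hf2 p hp).1
  have hinj : Set.InjOn f ↑P := by
    intro p1 h1 p2 h2 heq
    by_contra hne
    have hnadj : ¬ T.sq.Adj p1 p2 := hPst h1 h2 hne
    by_cases hp1 : p1 ∈ s
    · by_cases hp2 : p2 ∈ s
      · rw [hf1 p1 hp1, hf1 p2 hp2] at heq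
        exact hne heq
      · obtain ⟨_, hadj2⟩ := hf2 p2 hp2
        have : T.Adj p2 p1 := by
          rw [← hf1 p1 hp1, heq]
          exact hadj2
        exact hnadj (Or.inl this.symm)
    · by_cases hp2 : p2 ∈ s
      · obtain ⟨_, hadj1⟩ := hf2 p1 hp1
        have : T.Adj p1 p2 := by
          rw [← hf1 p2 hp2, ← heq]
          exact hadj1
        exact hnadj (Or.inl this)
      · obtain ⟨_, hadj1⟩ := hf2 p1 hp1
        obtain ⟨_, hadj2⟩ := hf2 p2 hp2
        refine hnadj (Or.inr ⟨hne, f p1, hadj1, ?_⟩)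
        rw [heq]
        exact hadj2.symm
  have hcardle : P.card ≤ s.card := Finset.card_le_card_of_injOn f hmaps hinj
  have : T.alpha ≤ s.card := by
    rw [hsq, ← hPcard]
    exact hcardle
  omega

theorem wc_to_sq (ht : T.IsTree) (h2 : 2 ≤ Fintype.card V) (hwc : T.WellCovered) :
    T.SquareStable := by
  classical
  have hWCu : WC T Finset.univ := by
    intro S S' hS hS'
    have hmx : ∀ S₀ : Finset V, MaxIn T Finset.univ S₀ → T.IsMaximalStable S₀ := by
      rintro S₀ ⟨_, hst, hdom⟩
      refine ⟨hst, fun v hv hstin => ?_⟩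
      obtain ⟨w, hwS, hadj⟩ := hdom v (Finset.mem_univ v) hv
      exact hstin (Set.mem_insert _ _) (Set.mem_insert_of_mem _ (Finset.mem_coe.2 hwS))
        (T.ne_of_adj hadj) hadj
    rw [hwc S (hmx S hS), hwc S' (hmx S' hS')]
  have hnbr : ∀ v : V, (NbU T Finset.univ v).Nonempty := by
    intro v
    obtain ⟨u, hu⟩ := Fintype.exists_ne_of_one_lt_card (by omega) v
    obtain ⟨p⟩ := ht.isConnected v u
    cases p with
    | nil => exact absurd rfl hu
    | cons h q => exact ⟨_, mem_NbU.2 ⟨Finset.mem_univ _, h⟩⟩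
  set L := Finset.univ.filter (fun x => (NbU T Finset.univ x).card = 1) with hLdef
  have hLmem : ∀ x, x ∈ L ↔ (NbU T Finset.univ x).card = 1 := by
    intro x
    simp [hLdef]
  have hstruct := main_lemma ht.IsAcyclic (Finset.univ.card) Finset.univ le_rfl hWCu
  by_cases hK2 : ∃ l1 l2 : V, l1 ∈ L ∧ l2 ∈ L ∧ T.Adj l1 l2
  · obtain ⟨l1, l2, hl1, hl2, hadj⟩ := hK2
    have hN1 : NbU T Finset.univ l1 = {l2} := by
      apply Finset.eq_singleton_iff_unique_mem.2
      refine ⟨mem_NbU.2 ⟨Finset.mem_univ _, hadj⟩, fun x hx => ?_⟩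
      exact Finset.card_le_one.1 (le_of_eq ((hLmem l1).1 hl1)) x hx l2
        (mem_NbU.2 ⟨Finset.mem_univ _, hadj⟩)
    have hN2 : NbU T Finset.univ l2 = {l1} := by
      apply Finset.eq_singleton_iff_unique_mem.2
      refine ⟨mem_NbU.2 ⟨Finset.mem_univ _, hadj.symm⟩, fun x hx => ?_⟩
      exact Finset.card_le_one.1 (le_of_eq ((hLmem l2).1 hl2)) x hx l1
        (mem_NbU.2 ⟨Finset.mem_univ _, hadj.symm⟩)
    have huniv2 : ∀ x : V, x = l1 ∨ x = l2 := by
      intro x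
      by_contra hc
      push_neg at hc
      obtain ⟨w⟩ := ht.isConnected l1 x
      obtain ⟨q, hq⟩ : ∃ q : T.Walk l1 x, q.IsPath := ⟨w.toPath.1, w.toPath.2⟩
      cases q with
      | nil => exact hc.1 rfl
      | cons h q2 =>
        rename_i y
        have hy : y = l2 := by
          have := mem_NbU.2 ⟨Finset.mem_univ y, h⟩
          rw [hN1, Finset.mem_singleton] at this
          exact this
        rw [← hy] at hN2
        cases q2 with
        | nil => exact hc.2 hy
        | cons h' q3 =>
          rename_i z
          have hz : z = l1 := by
            have := mem_NbU.2 ⟨Finset.mem_univ z, h'⟩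
            rw [hN2, Finset.mem_singleton] at this
            exact this
          rw [Walk.cons_isPath_iff] at hq
          apply hq.2
          rw [Walk.support_cons, List.mem_cons]
          right
          rw [← hz]
          exact Walk.start_mem_support q3
    have hstab1 : ∀ (G : SimpleGraph V), (∀ u w : V, u ≠ w → G.Adj u w) → G.alpha = 1 := by
      intro G hGadj
      apply le_antisymm
      · apply csSup_le (alpha_nonempty G)
        rintro n ⟨s, hst, rfl⟩
        by_contra hgt
        push_neg at hgt
        obtain ⟨u, hu, w, hw, huw⟩ := Finset.one_lt_card.1 hgt
        exact (stable_iff.1 hst u hu w hw) (hGadj u w huw)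
      · have hs : G.IsStableSet ↑({l1} : Finset V) := by
          rw [stable_iff]
          intro u hu w hw hadj'
          simp only [Finset.mem_singleton] at hu hw
          subst hu; subst hw
          exact G.irrefl hadj'
        have := card_le_alpha hs
        simpa using this
    have hadjall : ∀ u w : V, u ≠ w → T.Adj u w := by
      intro u w huw
      rcases huniv2 u with rfl | rfl <;> rcases huniv2 w with rfl | rfl
      · exact absurd rfl huw
      · exact hadj
      · exact hadj.symm
      · exact absurd rfl huw
    show T.alpha = T.sq.alpha
    rw [hstab1 T hadjall, hstab1 T.sq (fun u w huw => Or.inl (hadjall u w huw))]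
  · push_neg at hK2
    have hLstable : T.IsStableSet ↑L := by
      intro x hx y hy hne hadj
      exact hK2 x y (Finset.mem_coe.1 hx) (Finset.mem_coe.1 hy) hadj
    have hLmax : T.IsMaximalStable L := by
      refine ⟨hLstable, ?_⟩
      intro v hv hstin
      have hvleaf : (NbU T Finset.univ v).card ≠ 1 := fun h => hv ((hLmem v).2 h)
      rcases hstruct v (Finset.mem_univ v) (hnbr v) with h | ⟨w, hwmem, hwleaf⟩
      · exact hvleaf h
      · have hwL : w ∈ L := (hLmem w).2 hwleaf
        have hadj : T.Adj v w := (mem_NbU.1 hwmem).2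
        exact hstin (Set.mem_insert _ _) (Set.mem_insert_of_mem _ (Finset.mem_coe.2 hwL))
          (T.ne_of_adj hadj) hadj
    have hLcard : L.card = T.alpha := hwc L hLmax
    have hLsq : T.sq.IsStableSet ↑L := by
      intro x hx y hy hne hadj
      rcases hadj with hadj | ⟨_, w, h1, h2⟩
      · exact hK2 x y (Finset.mem_coe.1 hx) (Finset.mem_coe.1 hy) hadj
      · have hNx : NbU T Finset.univ x = {w} := by
          apply Finset.eq_singleton_iff_unique_mem.2
          refine ⟨mem_NbU.2 ⟨Finset.mem_univ _, h1⟩, fun z hz => ?_⟩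
          exact Finset.card_le_one.1 (le_of_eq ((hLmem x).1 (Finset.mem_coe.1 hx))) z hz w
            (mem_NbU.2 ⟨Finset.mem_univ _, h1⟩)
        have hNy : NbU T Finset.univ y = {w} := by
          apply Finset.eq_singleton_iff_unique_mem.2
          refine ⟨mem_NbU.2 ⟨Finset.mem_univ _, h2.symm⟩, fun z hz => ?_⟩
          exact Finset.card_le_one.1 (le_of_eq ((hLmem y).1 (Finset.mem_coe.1 hy))) z hz w
            (mem_NbU.2 ⟨Finset.mem_univ _, h2.symm⟩)
        exact step1 hWCu (Finset.mem_univ x) (Finset.mem_univ y) hNx hNy hne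
    have hle2 : T.alpha ≤ T.sq.alpha := hLcard ▸ card_le_alpha hLsq
    exact le_antisymm hle2 (sq_alpha_le T)

end P6


theorem stmt14 {V : Type*} [Fintype V] (T : SimpleGraph V) (ht : T.IsTree)
    (h2 : 2 ≤ Fintype.card V) :
    T.WellCovered ↔ T.SquareStable :=
  ⟨fun hwc => wc_to_sq ht h2 hwc, fun hsq => sqstable_to_wc hsq⟩
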